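/- arXiv:1907.05138 — 2 statements merged into one kernel-verified Lean document; each statement's English description precedes it below -/
import Mathlib

section
/- Consider the random directed multigraph model with an auxiliary introduction node, with introduction PGF χ and offspring PGF μ, on nodes {0,1,...,N}, and for 0 ≤ k ≤ N let q_k be the probability that the out-component of node 0 contains exactly k nodes other than node 0. For every M with 1 ≤ M ≤ N: χ(M/N) · [μ((M-1)/(N-1))]^M = ∑_{k=0}^{M} q_k · [μ((M-1)/(N-1))]^{M-k} · ∏_{j=0}^{k-1} (M-j)/(N-j), where an empty product is 1. -/
open scoped Classical

/-- The weight (probability) of a realization `g` of the random directed multigraph on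
nodes `{0, 1, ..., N}` with an auxiliary introduction node `0`: node `0` draws its
out-degree from the introduction pmf `pIn` and sends each of its out-edges to a
uniformly random node of `{1, ..., N}` (with replacement); each node `u ≠ 0` draws its
out-degree from the offspring pmf `pOff` and sends each of its out-edges to a uniformly
random node of `{1, ..., N} \ {u}` (with replacement).  No edges point to node `0`. -/
noncomputable def introWeight (N : ℕ) (pIn pOff : ℕ → ℝ)
    (g : Fin (N + 1) → List (Fin (N + 1))) : ℝ :=
  (if ∀ v ∈ g 0, v ≠ 0 then
      pIn (g 0).length * (1 / (N : ℝ)) ^ (g 0).length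
    else 0) *
  ∏ u ∈ Finset.univ.erase (0 : Fin (N + 1)),
    if ∀ v ∈ g u, v ≠ u ∧ v ≠ 0 then
      pOff (g u).length * (1 / ((N : ℝ) - 1)) ^ (g u).length
    else 0

/-- Probability of an event in the random multigraph model with an introduction node. -/
noncomputable def introProb (N : ℕ) (pIn pOff : ℕ → ℝ)
    (E : Set (Fin (N + 1) → List (Fin (N + 1)))) : ℝ :=
  ∑' g : Fin (N + 1) → List (Fin (N + 1)), Set.indicator E (introWeight N pIn pOff) g

/-- The out-component of the auxiliary node `0`. -/
def introOutComp (N : ℕ) (g : Fin (N + 1) → List (Fin (N + 1))) : Set (Fin (N + 1)) :=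
  {v | Relation.ReflTransGen (fun a b => b ∈ g a) 0 v}

/-- `introQProb N pIn pOff k` is the probability that the out-component of node `0`
contains exactly `k` nodes other than node `0` itself. -/
noncomputable def introQProb (N : ℕ) (pIn pOff : ℕ → ℝ) (k : ℕ) : ℝ :=
  introProb N pIn pOff {g | ((introOutComp N g) \ {0}).ncard = k}

open ENNReal

/-- Factorization of a tsum of products over a pi type, `Fin n` version. -/
lemma tsum_pi_prod_fin {β : Type*} : ∀ (n : ℕ) (f : Fin n → β → ℝ≥0∞),
    ∑' g : Fin n → β, ∏ i, f i (g i) = ∏ i, ∑' b, f i b := by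
  intro n
  induction n with
  | zero =>
    intro f
    simp only [Finset.univ_eq_empty, Finset.prod_empty]
    have : ∑' _g : Fin 0 → β, (1 : ℝ≥0∞) = 1 := by
      rw [tsum_eq_single (fun i => i.elim0)]
      intro b hb
      exact absurd (funext fun i => i.elim0) hb
    simpa using this
  | succ n ih =>
    intro f
    have e : (β × (Fin n → β)) ≃ (Fin (n + 1) → β) :=
      Fin.consEquiv (fun _ => β)
    rw [← Equiv.tsum_eq (Fin.consEquiv (fun _ : Fin (n+1) => β))
        (fun g => ∏ i, f i (g i))]
    have key : ∀ p : β × (Fin n → β),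
        (∏ i, f i (Fin.consEquiv (fun _ : Fin (n+1) => β) p i))
        = f 0 p.1 * ∏ i : Fin n, f i.succ (p.2 i) := by
      intro p
      rw [Fin.prod_univ_succ]
      simp [Fin.consEquiv]
    simp_rw [key]
    refine (ENNReal.tsum_prod
      (f := fun (a : β) (b : Fin n → β) => f 0 a * ∏ i : Fin n, f i.succ (b i))).trans ?_
    simp_rw [ENNReal.tsum_mul_left]
    rw [ENNReal.tsum_mul_right, ih (fun i => f i.succ), Fin.prod_univ_succ]

/-- Factorization of a tsum of products over a pi type with finite index. -/
lemma tsum_pi_prod {ι β : Type*} [Fintype ι] (f : ι → β → ℝ≥0∞) :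
    ∑' g : ι → β, ∏ i, f i (g i) = ∏ i, ∑' b, f i b := by
  classical
  set n := Fintype.card ι with hn
  set e := Fintype.equivFin ι with he
  set A : (Fin n → β) ≃ (ι → β) := Equiv.arrowCongr e.symm (Equiv.refl β) with hA
  rw [← Equiv.tsum_eq A (fun g => ∏ i, f i (g i))]
  have hApp : ∀ (h : Fin n → β) (i : ι), A h i = h (e i) := by
    intro h i; simp [hA, Equiv.arrowCongr]
  have key : ∀ h : Fin n → β, (∏ i, f i (A h i)) = ∏ j : Fin n, f (e.symm j) (h j) := by
    intro h
    rw [← Equiv.prod_comp e.symm (fun j => f j (A h j))]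
    refine Finset.prod_congr rfl fun j _ => ?_
    rw [hApp]; simp
  simp_rw [key]
  rw [tsum_pi_prod_fin n (fun j => f (e.symm j))]
  exact Equiv.prod_comp e.symm (fun i => ∑' b, f i b)

/-- Splitting lemma: a tsum of `Φ g * ∏_{i ∉ T} f i (g i)` where `Φ` only depends
on coordinates in `T` factors as a product. -/
lemma tsum_split {ι β : Type*} [Fintype ι] [DecidableEq ι] [Inhabited β]
    (T : Finset ι) (Φ : (ι → β) → ℝ≥0∞)
    (hΦ : ∀ g g' : ι → β, (∀ i ∈ T, g i = g' i) → Φ g = Φ g')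
    (f : ι → β → ℝ≥0∞) :
    ∑' g : ι → β, Φ g * ∏ i ∈ Tᶜ, f i (g i)
      = (∑' h : {x // x ∈ T} → β,
          Φ (fun i => if hi : i ∈ T then h ⟨i, hi⟩ else default))
        * ∏ i ∈ Tᶜ, ∑' b, f i b := by
  classical
  set e := (Equiv.piEquivPiSubtypeProd (fun i => i ∈ T) (fun _ => β)).symm with he
  rw [← Equiv.tsum_eq e (fun g => Φ g * ∏ i ∈ Tᶜ, f i (g i))]
  refine (ENNReal.tsum_prod
    (f := fun h h' => Φ (e (h, h')) * ∏ i ∈ Tᶜ, f i (e (h, h') i))).trans ?_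
  have hval : ∀ (h : {x // x ∈ T} → β) (h' : {x // ¬ x ∈ T} → β) (i : ι),
      e (h, h') i = if hi : i ∈ T then h ⟨i, hi⟩ else h' ⟨i, hi⟩ := by
    intro h h' i
    simp [he, Equiv.piEquivPiSubtypeProd_symm_apply]
  have hΦval : ∀ (h : {x // x ∈ T} → β) (h' : {x // ¬ x ∈ T} → β),
      Φ (e (h, h')) = Φ (fun i => if hi : i ∈ T then h ⟨i, hi⟩ else default) := by
    intro h h'
    apply hΦ
    intro i hi
    rw [hval]; simp [hi]
  have hprod : ∀ (h : {x // x ∈ T} → β) (h' : {x // ¬ x ∈ T} → β),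
      (∏ i ∈ Tᶜ, f i (e (h, h') i)) = ∏ j : {x // ¬ x ∈ T}, f j (h' j) := by
    intro h h'
    rw [Finset.prod_subtype Tᶜ (fun x => Finset.mem_compl) (fun i => f i (e (h, h') i))]
    refine Finset.prod_congr rfl fun j _ => ?_
    rw [hval]
    simp [j.2]
  calc ∑' (h : {x // x ∈ T} → β) (h' : {x // ¬ x ∈ T} → β),
        Φ (e (h, h')) * ∏ i ∈ Tᶜ, f i (e (h, h') i)
      = ∑' (h : {x // x ∈ T} → β),
          Φ (fun i => if hi : i ∈ T then h ⟨i, hi⟩ else default)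
          * ∑' h' : {x // ¬ x ∈ T} → β, ∏ j : {x // ¬ x ∈ T}, f j (h' j) := by
        congr 1; funext h
        simp_rw [hΦval, hprod]
        rw [ENNReal.tsum_mul_left]
    _ = _ := by
        rw [ENNReal.tsum_mul_right, tsum_pi_prod (fun (j : {x // ¬ x ∈ T}) b => f j b)]
        congr 1
        exact (Finset.prod_subtype Tᶜ (fun x => Finset.mem_compl) (fun i => ∑' b, f i b)).symm

lemma tsum_ite_mem_card {V : Type*} [Fintype V] [DecidableEq V] (A : Finset V) :
    ∑' v : V, (if v ∈ A then (1 : ℝ≥0∞) else 0) = (A.card : ℝ≥0∞) := by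
  rw [tsum_fintype]
  simp [Finset.sum_ite_mem]

lemma tsum_list_mass {N' : ℕ} (p : ℕ → ℝ) (hp0 : ∀ n, 0 ≤ p n)
    (hsum : Summable p) (d : ℝ) (hd : 0 < d) (A : Finset (Fin (N'+1))) (hA : (A.card : ℝ) ≤ d) :
    ∑' l : List (Fin (N'+1)),
        (if ∀ v ∈ l, v ∈ A then ENNReal.ofReal (p l.length * (1/d) ^ l.length) else 0)
      = ENNReal.ofReal (∑' n, p n * ((A.card : ℝ) / d) ^ n) := by
  have hx0 : (0:ℝ) ≤ (A.card : ℝ) / d := by positivity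
  have hx1 : (A.card : ℝ) / d ≤ 1 := by
    rw [div_le_one hd]; exact hA
  have hterm0 : ∀ n, 0 ≤ p n * ((A.card : ℝ) / d) ^ n := by
    intro n; exact mul_nonneg (hp0 n) (pow_nonneg hx0 n)
  have htermsum : Summable (fun n => p n * ((A.card : ℝ) / d) ^ n) := by
    refine Summable.of_nonneg_of_le hterm0 (fun n => ?_) hsum
    calc p n * ((A.card : ℝ) / d) ^ n ≤ p n * 1 := by
          exact mul_le_mul_of_nonneg_left (pow_le_one₀ hx0 hx1) (hp0 n)
      _ = p n := mul_one _
  rw [ENNReal.ofReal_tsum_of_nonneg hterm0 htermsum]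
  rw [← Equiv.tsum_eq List.equivSigmaTuple.symm
    (fun l => if ∀ v ∈ l, v ∈ A then ENNReal.ofReal (p l.length * (1/d) ^ l.length) else 0)]
  rw [ENNReal.tsum_sigma']
  congr 1
  funext n
  have hval : ∀ t : Fin n → Fin (N'+1),
      (if ∀ v ∈ (List.equivSigmaTuple.symm ⟨n, t⟩), v ∈ A then
          ENNReal.ofReal (p (List.equivSigmaTuple.symm ⟨n, t⟩).length
            * (1/d) ^ (List.equivSigmaTuple.symm ⟨n, t⟩).length) else 0)
        = ENNReal.ofReal (p n * (1/d) ^ n) * ∏ i : Fin n, (if t i ∈ A then (1:ℝ≥0∞) else 0) := by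
    intro t
    rw [List.equivSigmaTuple_symm_apply]
    simp only [List.length_ofFn]
    by_cases h : ∀ v ∈ List.ofFn t, v ∈ A
    · rw [if_pos h]
      have : ∀ i : Fin n, t i ∈ A := List.forall_mem_ofFn_iff.mp h
      rw [Finset.prod_eq_one (fun i _ => if_pos (this i)), mul_one]
    · rw [if_neg h]
      obtain ⟨i, hi⟩ : ∃ i : Fin n, t i ∉ A := by
        by_contra hc
        push_neg at hc
        exact h (List.forall_mem_ofFn_iff.mpr hc)
      rw [Finset.prod_eq_zero (f := fun i => if t i ∈ A then (1:ℝ≥0∞) else 0) (Finset.mem_univ i) (if_neg hi), mul_zero]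
  simp_rw [hval]
  rw [ENNReal.tsum_mul_left, tsum_pi_prod (fun (_ : Fin n) (v : Fin (N'+1)) => if v ∈ A then (1:ℝ≥0∞) else 0)]
  simp_rw [tsum_ite_mem_card]
  rw [Finset.prod_const, Finset.card_univ, Fintype.card_fin]
  have hcast : (A.card : ℝ≥0∞) = ENNReal.ofReal (A.card : ℝ) := by
    rw [ENNReal.ofReal_natCast]
  rw [hcast, ← ENNReal.ofReal_pow (by positivity),
    ← ENNReal.ofReal_mul (mul_nonneg (hp0 n) (by positivity))]
  congr 1
  rw [div_pow, div_pow, one_pow]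
  ring
/-- ENNReal per-node weight. -/
noncomputable def nodeW (N : ℕ) (pIn pOff : ℕ → ℝ) (u : Fin (N+1)) (l : List (Fin (N+1))) : ℝ≥0∞ :=
  if u = 0 then
    (if ∀ v ∈ l, v ≠ 0 then ENNReal.ofReal (pIn l.length * (1/(N:ℝ)) ^ l.length) else 0)
  else
    (if ∀ v ∈ l, v ≠ u ∧ v ≠ 0 then ENNReal.ofReal (pOff l.length * (1/((N:ℝ)-1)) ^ l.length) else 0)

lemma nodeW_ne_top (N : ℕ) (pIn pOff : ℕ → ℝ) (u : Fin (N+1)) (l : List (Fin (N+1))) :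
    nodeW N pIn pOff u l ≠ ⊤ := by
  unfold nodeW
  split_ifs <;> simp

/-- ENNReal weight of a graph. -/
noncomputable def WE (N : ℕ) (pIn pOff : ℕ → ℝ) (g : Fin (N+1) → List (Fin (N+1))) : ℝ≥0∞ :=
  ∏ u, nodeW N pIn pOff u (g u)

lemma WE_ne_top (N : ℕ) (pIn pOff : ℕ → ℝ) (g : Fin (N+1) → List (Fin (N+1))) :
    WE N pIn pOff g ≠ ⊤ := by
  unfold WE
  exact (ENNReal.prod_lt_top (fun u _ => (nodeW_ne_top N pIn pOff u (g u)).lt_top)).ne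

/-- ENNReal probability of an event. -/
noncomputable def PEnn (N : ℕ) (pIn pOff : ℕ → ℝ) (E : Set (Fin (N+1) → List (Fin (N+1)))) : ℝ≥0∞ :=
  ∑' g, Set.indicator E (WE N pIn pOff) g

lemma WE_eq_ofReal (N : ℕ) (hN : 2 ≤ N) (pIn pOff : ℕ → ℝ)
    (hIn0 : ∀ ℓ, 0 ≤ pIn ℓ) (hOff0 : ∀ ℓ, 0 ≤ pOff ℓ)
    (g : Fin (N+1) → List (Fin (N+1))) :
    WE N pIn pOff g = ENNReal.ofReal (introWeight N pIn pOff g) := by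
  unfold WE introWeight
  have hprod : ∀ u ∈ Finset.univ.erase (0 : Fin (N+1)), (0:ℝ) ≤
      (if ∀ v ∈ g u, v ≠ u ∧ v ≠ 0 then
        pOff (g u).length * (1/((N:ℝ)-1)) ^ (g u).length else 0) := by
    intro u _
    split_ifs
    · exact mul_nonneg (hOff0 _) (pow_nonneg (div_nonneg zero_le_one (by
        have : (2:ℝ) ≤ (N:ℝ) := by exact_mod_cast hN
        linarith)) _)
    · exact le_refl 0
  rw [ENNReal.ofReal_mul (by
    split_ifs
    · exact mul_nonneg (hIn0 _) (by positivity)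
    · exact le_refl 0),
    ENNReal.ofReal_prod_of_nonneg hprod]
  rw [← Finset.mul_prod_erase Finset.univ (fun u => nodeW N pIn pOff u (g u)) (Finset.mem_univ 0)]
  congr 1
  · unfold nodeW
    rw [if_pos rfl]
    split_ifs <;> simp
  · refine Finset.prod_congr rfl fun u hu => ?_
    have hu0 : u ≠ 0 := (Finset.mem_erase.mp hu).1
    unfold nodeW
    rw [if_neg hu0]
    split_ifs <;> simp

lemma introWeight_nonneg (N : ℕ) (hN : 2 ≤ N) (pIn pOff : ℕ → ℝ)
    (hIn0 : ∀ ℓ, 0 ≤ pIn ℓ) (hOff0 : ∀ ℓ, 0 ≤ pOff ℓ)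
    (g : Fin (N+1) → List (Fin (N+1))) : 0 ≤ introWeight N pIn pOff g := by
  unfold introWeight
  apply mul_nonneg
  · split_ifs
    · exact mul_nonneg (hIn0 _) (by positivity)
    · exact le_refl 0
  · apply Finset.prod_nonneg
    intro u _
    split_ifs
    · exact mul_nonneg (hOff0 _) (pow_nonneg (div_nonneg zero_le_one (by
        have : (2:ℝ) ≤ (N:ℝ) := by exact_mod_cast hN
        linarith)) _)
    · exact le_refl 0

lemma introProb_eq_toReal (N : ℕ) (hN : 2 ≤ N) (pIn pOff : ℕ → ℝ)
    (hIn0 : ∀ ℓ, 0 ≤ pIn ℓ) (hOff0 : ∀ ℓ, 0 ≤ pOff ℓ)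
    (E : Set (Fin (N+1) → List (Fin (N+1)))) :
    introProb N pIn pOff E = (PEnn N pIn pOff E).toReal := by
  unfold introProb PEnn
  rw [ENNReal.tsum_toReal_eq]
  · congr 1
    funext g
    by_cases hg : g ∈ E
    · rw [Set.indicator_of_mem hg, Set.indicator_of_mem hg,
        WE_eq_ofReal N hN pIn pOff hIn0 hOff0 g,
        ENNReal.toReal_ofReal (introWeight_nonneg N hN pIn pOff hIn0 hOff0 g)]
    · rw [Set.indicator_of_notMem hg, Set.indicator_of_notMem hg, ENNReal.toReal_zero]
  · intro g
    by_cases hg : g ∈ E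
    · rw [Set.indicator_of_mem hg]; exact WE_ne_top N pIn pOff g
    · rw [Set.indicator_of_notMem hg]; exact ENNReal.zero_ne_top
/-- Characterization of the event `introOutComp N g \ {0} = ↑c`
in terms of the coordinates of `g` in `insert 0 c` only. -/
lemma outComp_diff_eq_iff (N : ℕ) (g : Fin (N+1) → List (Fin (N+1)))
    (c : Finset (Fin (N+1))) (h0 : (0 : Fin (N+1)) ∉ c) :
    (introOutComp N g \ {0} = ↑c) ↔
      ((∀ u, (u = 0 ∨ u ∈ c) → ∀ v ∈ g u, (v = 0 ∨ v ∈ c)) ∧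
       ∀ x ∈ c, Relation.ReflTransGen (fun a b => b ∈ g a ∧ (a = 0 ∨ a ∈ c)) 0 x) := by
  constructor
  · intro h
    have hsub : ∀ v, v ∈ introOutComp N g → v = 0 ∨ v ∈ c := by
      intro v hv
      by_cases hv0 : v = 0
      · exact Or.inl hv0
      · right
        have : v ∈ introOutComp N g \ {0} := ⟨hv, hv0⟩
        rw [h] at this
        exact this
    have hmemC : ∀ u, (u = 0 ∨ u ∈ c) → u ∈ introOutComp N g := by
      intro u hu
      rcases hu with hu | hu
      · rw [hu]; exact Relation.ReflTransGen.refl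
      · have : u ∈ (↑c : Set (Fin (N+1))) := hu
        rw [← h] at this
        exact this.1
    constructor
    · intro u hu v hv
      exact hsub v ((hmemC u hu).tail hv)
    · intro x hx
      have hxC : x ∈ introOutComp N g := hmemC x (Or.inr hx)
      clear hx
      induction hxC with
      | refl => exact Relation.ReflTransGen.refl
      | tail hreach hstep ih =>
        exact ih.tail ⟨hstep, hsub _ hreach⟩
  · rintro ⟨hcl, hreach⟩
    ext v
    simp only [Set.mem_diff, Set.mem_singleton_iff, Finset.coe_insert, Set.mem_setOf_eq,
      Finset.mem_coe]
    constructor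
    · rintro ⟨hv, hv0⟩
      have key : ∀ w, Relation.ReflTransGen (fun a b => b ∈ g a) 0 w → w = 0 ∨ w ∈ c := by
        intro w hw
        induction hw with
        | refl => exact Or.inl rfl
        | tail hreach' hstep ih => exact hcl _ ih _ hstep
      exact (key v hv).resolve_left hv0
    · intro hv
      refine ⟨(by
        have key2 : ∀ w, Relation.ReflTransGen (fun a b => b ∈ g a ∧ (a = 0 ∨ a ∈ c)) 0 w →
            Relation.ReflTransGen (fun a b => b ∈ g a) 0 w := by
          intro w hw
          induction hw with
          | refl => exact Relation.ReflTransGen.refl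
          | tail _ hs ih => exact ih.tail hs.1
        exact key2 v (hreach v hv)), ?_⟩
      intro h'
      rw [h'] at hv
      exact h0 hv

/-- Locality: the event `introOutComp N g \ {0} = ↑c` only depends on the coordinates
of `g` in `insert 0 c`. -/
lemma outComp_event_local (N : ℕ) (c : Finset (Fin (N+1))) (h0 : (0 : Fin (N+1)) ∉ c)
    (g g' : Fin (N+1) → List (Fin (N+1)))
    (hagree : ∀ i, (i = 0 ∨ i ∈ c) → g i = g' i) :
    (introOutComp N g \ {0} = ↑c) ↔ (introOutComp N g' \ {0} = ↑c) := by
  rw [outComp_diff_eq_iff N g c h0, outComp_diff_eq_iff N g' c h0]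
  have hrel : (fun a b => b ∈ g a ∧ (a = 0 ∨ a ∈ c))
      = (fun a b => b ∈ g' a ∧ (a = 0 ∨ a ∈ c)) := by
    funext a b
    apply propext
    constructor
    · rintro ⟨hb, ha⟩; exact ⟨(hagree a ha) ▸ hb, ha⟩
    · rintro ⟨hb, ha⟩; exact ⟨(hagree a ha) ▸ hb, ha⟩
  rw [hrel]
  constructor
  · rintro ⟨h1, h2⟩
    exact ⟨fun u hu v hv => h1 u hu v ((hagree u hu) ▸ hv), h2⟩
  · rintro ⟨h1, h2⟩
    exact ⟨fun u hu v hv => h1 u hu v ((hagree u hu).symm ▸ hv), h2⟩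
/-- Action of a permutation of the nodes on realizations. -/
def Gact (N : ℕ) (σ : Equiv.Perm (Fin (N+1))) (g : Fin (N+1) → List (Fin (N+1))) :
    Fin (N+1) → List (Fin (N+1)) :=
  fun u => (g (σ.symm u)).map σ

lemma Gact_Gact (N : ℕ) (σ : Equiv.Perm (Fin (N+1))) (g : Fin (N+1) → List (Fin (N+1))) :
    Gact N σ.symm (Gact N σ g) = g := by
  funext u
  simp [Gact, List.map_map]

lemma mem_Gact (N : ℕ) (σ : Equiv.Perm (Fin (N+1))) (g : Fin (N+1) → List (Fin (N+1)))
    (a b : Fin (N+1)) : b ∈ Gact N σ g a ↔ σ.symm b ∈ g (σ.symm a) := by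
  simp only [Gact, List.mem_map]
  constructor
  · rintro ⟨w, hw, rfl⟩; simpa using hw
  · intro h; exact ⟨σ.symm b, h, by simp⟩

lemma reach_Gact (N : ℕ) (σ : Equiv.Perm (Fin (N+1))) (hσ0 : σ 0 = 0)
    (g : Fin (N+1) → List (Fin (N+1))) (x : Fin (N+1))
    (h : Relation.ReflTransGen (fun a b => b ∈ g a) 0 x) :
    Relation.ReflTransGen (fun a b => b ∈ Gact N σ g a) 0 (σ x) := by
  induction h with
  | refl => rw [hσ0]
  | tail hreach hstep ih =>
    refine ih.tail ?_
    rw [mem_Gact]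
    simpa using hstep

lemma mem_outComp_Gact (N : ℕ) (σ : Equiv.Perm (Fin (N+1))) (hσ0 : σ 0 = 0)
    (g : Fin (N+1) → List (Fin (N+1))) (x : Fin (N+1)) :
    x ∈ introOutComp N (Gact N σ g) ↔ σ.symm x ∈ introOutComp N g := by
  have hσs0 : σ.symm 0 = 0 := (Equiv.symm_apply_eq σ).mpr hσ0.symm
  constructor
  · intro hx
    have := reach_Gact N σ.symm hσs0 (Gact N σ g) x hx
    rw [Gact_Gact N σ g] at this
    exact this
  · intro hx
    have := reach_Gact N σ hσ0 g (σ.symm x) hx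
    simp only [Equiv.apply_symm_apply] at this; exact this

lemma outComp_event_Gact (N : ℕ) (σ : Equiv.Perm (Fin (N+1))) (hσ0 : σ 0 = 0)
    (c c' : Finset (Fin (N+1))) (hiff : ∀ y, σ y ∈ c' ↔ y ∈ c)
    (g : Fin (N+1) → List (Fin (N+1))) :
    (introOutComp N (Gact N σ g) \ {0} = ↑c') ↔ (introOutComp N g \ {0} = ↑c) := by
  have h0iff : ∀ y, σ y = 0 ↔ y = 0 := by
    intro y
    exact ⟨fun h => σ.injective (h.trans hσ0.symm), fun h => by rw [h]; exact hσ0⟩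
  rw [Set.ext_iff, Set.ext_iff]
  have key : ∀ y : Fin (N+1),
      ((σ y ∈ introOutComp N (Gact N σ g) \ {0}) ↔ σ y ∈ (↑c' : Set (Fin (N+1)))) ↔
      ((y ∈ introOutComp N g \ {0}) ↔ y ∈ (↑c : Set (Fin (N+1)))) := by
    intro y
    simp only [Set.mem_diff, Set.mem_singleton_iff, Finset.mem_coe]
    rw [mem_outComp_Gact N σ hσ0 g (σ y)]
    simp only [Equiv.symm_apply_apply]
    rw [hiff y, h0iff y]
  constructor
  · intro h y
    exact (key y).mp (h (σ y))
  · intro h x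
    have := (key (σ.symm x)).mpr (h (σ.symm x))
    simpa using this

lemma nodeW_Gact (N : ℕ) (pIn pOff : ℕ → ℝ) (σ : Equiv.Perm (Fin (N+1))) (hσ0 : σ 0 = 0)
    (u : Fin (N+1)) (l : List (Fin (N+1))) :
    nodeW N pIn pOff (σ u) (l.map σ) = nodeW N pIn pOff u l := by
  have h0iff : ∀ y : Fin (N+1), σ y = 0 ↔ y = 0 := by
    intro y
    exact ⟨fun h => σ.injective (h.trans hσ0.symm), fun h => by rw [h]; exact hσ0⟩
  unfold nodeW
  simp only [List.length_map]
  by_cases hu : u = 0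
  · rw [if_pos ((h0iff u).mpr hu), if_pos hu]
    have hcond : (∀ v ∈ l.map σ, v ≠ 0) ↔ (∀ v ∈ l, v ≠ 0) := by
      rw [List.forall_mem_map]
      exact forall₂_congr fun w _ => not_congr (h0iff w)
    rw [if_congr hcond rfl rfl]
  · rw [if_neg (fun h => hu ((h0iff u).mp h)), if_neg hu]
    have hcond : (∀ v ∈ l.map σ, v ≠ σ u ∧ v ≠ 0) ↔ (∀ v ∈ l, v ≠ u ∧ v ≠ 0) := by
      rw [List.forall_mem_map]
      refine forall₂_congr fun w _ => ?_
      have h1 : σ w = σ u ↔ w = u := ⟨fun h => σ.injective h, fun h => by rw [h]⟩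
      exact and_congr (not_congr h1) (not_congr (h0iff w))
    rw [if_congr hcond rfl rfl]

lemma WE_Gact (N : ℕ) (pIn pOff : ℕ → ℝ) (σ : Equiv.Perm (Fin (N+1))) (hσ0 : σ 0 = 0)
    (g : Fin (N+1) → List (Fin (N+1))) :
    WE N pIn pOff (Gact N σ g) = WE N pIn pOff g := by
  unfold WE
  rw [← Equiv.prod_comp σ (fun u => nodeW N pIn pOff u (Gact N σ g u))]
  refine Finset.prod_congr rfl fun u _ => ?_
  have hg : Gact N σ g (σ u) = (g u).map σ := by simp [Gact]
  rw [hg, nodeW_Gact N pIn pOff σ hσ0 u (g u)]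

/-- The probability that the out-component (minus `0`) equals a given finset only
depends on the cardinality of the finset. -/
lemma PEnn_comp_symm (N : ℕ) (pIn pOff : ℕ → ℝ) (c c' : Finset (Fin (N+1)))
    (h0 : (0 : Fin (N+1)) ∉ c) (h0' : (0 : Fin (N+1)) ∉ c') (hcard : c.card = c'.card) :
    PEnn N pIn pOff {g | introOutComp N g \ {0} = ↑c}
      = PEnn N pIn pOff {g | introOutComp N g \ {0} = ↑c'} := by
  classical
  set e0 : {x // x ∈ c} ≃ {x // x ∈ c'} := Finset.equivOfCardEq hcard with he0
  set π : Equiv.Perm (Fin (N+1)) := e0.extendSubtype with hπ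
  have hπc : ∀ x, x ∈ c → π x ∈ c' := fun x hx => e0.extendSubtype_mem x hx
  have hπ0 : π 0 ∉ c' := e0.extendSubtype_not_mem 0 h0
  set σ : Equiv.Perm (Fin (N+1)) := π.trans (Equiv.swap 0 (π 0)) with hσ
  have hσ0 : σ 0 = 0 := by
    simp [hσ, Equiv.swap_apply_right]
  have hσc : ∀ x ∈ c, σ x ∈ c' := by
    intro x hx
    have h1 : π x ∈ c' := hπc x hx
    have h2 : π x ≠ 0 := fun h => h0' (h ▸ h1)
    have h3 : π x ≠ π 0 := fun h => hπ0 (h ▸ h1)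
    have : σ x = π x := by
      simp only [hσ, Equiv.trans_apply]
      exact Equiv.swap_apply_of_ne_of_ne h2 h3
    rw [this]; exact h1
  have himg : c.image σ = c' := by
    apply Finset.eq_of_subset_of_card_le
    · intro y hy
      obtain ⟨w, hw, rfl⟩ := Finset.mem_image.mp hy
      exact hσc w hw
    · rw [Finset.card_image_of_injective c σ.injective, ← hcard]
  have hiff : ∀ y, σ y ∈ c' ↔ y ∈ c := by
    intro y
    constructor
    · intro hy
      rw [← himg] at hy
      obtain ⟨w, hw, hwe⟩ := Finset.mem_image.mp hy
      rwa [← σ.injective hwe]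
    · intro hy
      rw [← himg]
      exact Finset.mem_image_of_mem σ hy
  set EG : (Fin (N+1) → List (Fin (N+1))) ≃ (Fin (N+1) → List (Fin (N+1))) :=
    ⟨Gact N σ, Gact N σ.symm, fun g => Gact_Gact N σ g, fun g => by
      simpa using Gact_Gact N σ.symm g⟩ with hEG
  unfold PEnn
  rw [← Equiv.tsum_eq EG (Set.indicator {g | introOutComp N g \ {0} = ↑c'} (WE N pIn pOff))]
  congr 1
  funext g
  have hEGg : EG g = Gact N σ g := rfl
  rw [Set.indicator_apply, Set.indicator_apply, hEGg]
  have hev : (Gact N σ g ∈ {g | introOutComp N g \ {0} = ↑c'})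
      ↔ (g ∈ {g | introOutComp N g \ {0} = ↑c}) := by
    simp only [Set.mem_setOf_eq]
    exact outComp_event_Gact N σ hσ0 c c' hiff g
  rw [if_congr hev rfl rfl]
  by_cases hg : g ∈ {g | introOutComp N g \ {0} = ↑c}
  · rw [if_pos hg, if_pos hg, WE_Gact N pIn pOff σ hσ0 g]
  · rw [if_neg hg, if_neg hg]
lemma summable_of_tsum_one (p : ℕ → ℝ) (h : ∑' n, p n = 1) : Summable p := by
  by_contra hs
  rw [tsum_eq_zero_of_not_summable hs] at h
  norm_num at h

/-- Rewriting the node-0 weight as the canonical `if ∈ A` form. -/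
lemma nodeW_zero_eq (N : ℕ) (pIn pOff : ℕ → ℝ) (l : List (Fin (N+1))) :
    nodeW N pIn pOff 0 l = if ∀ v ∈ l, v ∈ Finset.univ.erase (0 : Fin (N+1)) then
      ENNReal.ofReal (pIn l.length * (1/(N:ℝ)) ^ l.length) else 0 := by
  unfold nodeW
  rw [if_pos rfl]
  refine if_congr (forall₂_congr fun v _ => ?_) rfl rfl
  simp [Finset.mem_erase]

/-- Rewriting the offspring weight as the canonical `if ∈ A` form. -/
lemma nodeW_off_eq (N : ℕ) (pIn pOff : ℕ → ℝ) (u : Fin (N+1)) (hu : u ≠ 0)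
    (l : List (Fin (N+1))) :
    nodeW N pIn pOff u l = if ∀ v ∈ l, v ∈ (Finset.univ.erase (0 : Fin (N+1))).erase u then
      ENNReal.ofReal (pOff l.length * (1/((N:ℝ)-1)) ^ l.length) else 0 := by
  unfold nodeW
  rw [if_neg hu]
  refine if_congr (forall₂_congr fun v _ => ?_) rfl rfl
  simp [Finset.mem_erase, and_assoc]

/-- Each node's total weight mass is `1`. -/
lemma tsum_nodeW_total (N : ℕ) (hN : 2 ≤ N) (pIn pOff : ℕ → ℝ)
    (hIn0 : ∀ ℓ, 0 ≤ pIn ℓ) (hInsum : ∑' ℓ, pIn ℓ = 1)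
    (hOff0 : ∀ ℓ, 0 ≤ pOff ℓ) (hOffsum : ∑' ℓ, pOff ℓ = 1)
    (u : Fin (N+1)) :
    ∑' l : List (Fin (N+1)), nodeW N pIn pOff u l = 1 := by
  have hN0 : (0:ℝ) < N := by positivity
  have hNpos : 0 < N := by omega
  by_cases hu : u = 0
  · subst hu
    simp_rw [nodeW_zero_eq N pIn pOff]
    rw [tsum_list_mass pIn hIn0 (summable_of_tsum_one pIn hInsum) (N:ℝ) hN0
      (Finset.univ.erase (0 : Fin (N+1)))
      (by
        rw [Finset.card_erase_of_mem (Finset.mem_univ _), Finset.card_univ, Fintype.card_fin]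
        simp)]
    rw [Finset.card_erase_of_mem (Finset.mem_univ _), Finset.card_univ, Fintype.card_fin]
    simp only [Nat.add_sub_cancel]
    rw [div_self (ne_of_gt hN0)]
    simp only [one_pow, mul_one]
    rw [hInsum, ENNReal.ofReal_one]
  · simp_rw [nodeW_off_eq N pIn pOff u hu]
    have hd : (0:ℝ) < (N:ℝ) - 1 := by
      have : (2:ℝ) ≤ (N:ℝ) := by exact_mod_cast hN
      linarith
    have hmem : u ∈ Finset.univ.erase (0 : Fin (N+1)) :=
      Finset.mem_erase.mpr ⟨hu, Finset.mem_univ u⟩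
    have hcard : (((Finset.univ.erase (0 : Fin (N+1))).erase u).card : ℝ) = (N:ℝ) - 1 := by
      rw [Finset.card_erase_of_mem hmem,
        Finset.card_erase_of_mem (Finset.mem_univ _), Finset.card_univ, Fintype.card_fin]
      simp only [Nat.add_sub_cancel]
      rw [Nat.cast_sub (by omega)]
      simp
    rw [tsum_list_mass pOff hOff0 (summable_of_tsum_one pOff hOffsum) ((N:ℝ)-1) hd
      _ (le_of_eq hcard)]
    rw [hcard, div_self (ne_of_gt hd)]
    simp only [one_pow, mul_one]
    rw [hOffsum, ENNReal.ofReal_one]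

/-- Restricting an offspring node's edges to land in `S`. -/
lemma nodeW_restrict (N : ℕ) (pIn pOff : ℕ → ℝ) (u : Fin (N+1)) (hu : u ≠ 0)
    (S : Finset (Fin (N+1))) (h0S : (0 : Fin (N+1)) ∉ S) (l : List (Fin (N+1))) :
    nodeW N pIn pOff u l * (if ∀ v ∈ l, v ∈ S then 1 else 0)
      = if ∀ v ∈ l, v ∈ S.erase u then
          ENNReal.ofReal (pOff l.length * (1/((N:ℝ)-1)) ^ l.length) else 0 := by
  unfold nodeW
  rw [if_neg hu]
  by_cases h3 : ∀ v ∈ l, v ∈ S.erase u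
  · have h1 : ∀ v ∈ l, v ≠ u ∧ v ≠ 0 := fun v hv =>
      ⟨(Finset.mem_erase.mp (h3 v hv)).1,
       fun he => h0S (he ▸ (Finset.mem_erase.mp (h3 v hv)).2)⟩
    have h2 : ∀ v ∈ l, v ∈ S := fun v hv => (Finset.mem_erase.mp (h3 v hv)).2
    rw [if_pos h3, if_pos h1, if_pos h2, mul_one]
  · rw [if_neg h3]
    by_cases h1 : ∀ v ∈ l, v ≠ u ∧ v ≠ 0
    · by_cases h2 : ∀ v ∈ l, v ∈ S
      · exact absurd (fun v hv => Finset.mem_erase.mpr ⟨(h1 v hv).1, h2 v hv⟩) h3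
      · rw [if_pos h1, if_neg h2, mul_zero]
    · rw [if_neg h1, zero_mul]

/-- Restricting node 0's edges to land in `S`. -/
lemma nodeW_zero_restrict (N : ℕ) (pIn pOff : ℕ → ℝ)
    (S : Finset (Fin (N+1))) (h0S : (0 : Fin (N+1)) ∉ S) (l : List (Fin (N+1))) :
    nodeW N pIn pOff 0 l * (if ∀ v ∈ l, v ∈ S then 1 else 0)
      = if ∀ v ∈ l, v ∈ S then
          ENNReal.ofReal (pIn l.length * (1/(N:ℝ)) ^ l.length) else 0 := by
  unfold nodeW
  rw [if_pos rfl]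
  by_cases h2 : ∀ v ∈ l, v ∈ S
  · have h1 : ∀ v ∈ l, v ≠ 0 := fun v hv he => h0S (he ▸ h2 v hv)
    rw [if_pos h2, if_pos h2, if_pos h1, mul_one]
  · rw [if_neg h2, if_neg h2, mul_zero]
lemma PEnn_le_one (N : ℕ) (hN : 2 ≤ N) (pIn pOff : ℕ → ℝ)
    (hIn0 : ∀ ℓ, 0 ≤ pIn ℓ) (hInsum : ∑' ℓ, pIn ℓ = 1)
    (hOff0 : ∀ ℓ, 0 ≤ pOff ℓ) (hOffsum : ∑' ℓ, pOff ℓ = 1)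
    (E : Set (Fin (N+1) → List (Fin (N+1)))) :
    PEnn N pIn pOff E ≤ 1 := by
  unfold PEnn
  calc ∑' g, Set.indicator E (WE N pIn pOff) g
      ≤ ∑' g, WE N pIn pOff g := Summable.tsum_le_tsum (fun g => Set.indicator_le_self E _ g)
        ENNReal.summable ENNReal.summable
    _ = ∏ u, ∑' l, nodeW N pIn pOff u l := tsum_pi_prod _
    _ = 1 := by
        rw [Finset.prod_eq_one]
        intro u _
        exact tsum_nodeW_total N hN pIn pOff hIn0 hInsum hOff0 hOffsum u

lemma indicator_ncard_decomp (N : ℕ) (pIn pOff : ℕ → ℝ) (k : ℕ)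
    (g : Fin (N+1) → List (Fin (N+1))) :
    Set.indicator {g | ((introOutComp N g) \ {0}).ncard = k} (WE N pIn pOff) g
      = ∑ c ∈ (Finset.univ.erase (0 : Fin (N+1))).powersetCard k,
          Set.indicator {g | introOutComp N g \ {0} = ↑c} (WE N pIn pOff) g := by
  classical
  have hfin : (introOutComp N g \ {0}).Finite := Set.toFinite _
  set c₀ := hfin.toFinset with hc₀
  have hcoe : (↑c₀ : Set (Fin (N+1))) = introOutComp N g \ {0} := hfin.coe_toFinset
  by_cases hk : ((introOutComp N g) \ {0}).ncard = k
  · have hmem : c₀ ∈ (Finset.univ.erase (0 : Fin (N+1))).powersetCard k := by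
      rw [Finset.mem_powersetCard]
      constructor
      · intro x hx
        have : x ∈ introOutComp N g \ {0} := by rw [← hcoe]; exact_mod_cast hx
        exact Finset.mem_erase.mpr ⟨this.2, Finset.mem_univ x⟩
      · rw [← Set.ncard_eq_toFinset_card _ hfin]; exact hk
    rw [Set.indicator_of_mem (by exact hk), Finset.sum_eq_single c₀]
    · rw [Set.indicator_of_mem (by exact hcoe.symm)]
    · intro b _ hb
      refine Set.indicator_of_notMem (fun hgb => hb ?_) _
      have : (↑b : Set (Fin (N+1))) = ↑c₀ := by
        rw [hcoe]; exact (hgb : introOutComp N g \ {0} = ↑b).symm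
      exact_mod_cast Finset.coe_injective this
    · intro hc
      exact absurd hmem hc
  · rw [Set.indicator_of_notMem (by exact hk)]
    symm
    refine Finset.sum_eq_zero fun c hc => ?_
    refine Set.indicator_of_notMem (fun hgc => hk ?_) _
    rw [(hgc : introOutComp N g \ {0} = ↑c), Set.ncard_coe_finset]
    exact (Finset.mem_powersetCard.mp hc).2

lemma PEnn_ncard_decomp (N : ℕ) (pIn pOff : ℕ → ℝ) (k : ℕ) :
    PEnn N pIn pOff {g | ((introOutComp N g) \ {0}).ncard = k}
      = ∑ c ∈ (Finset.univ.erase (0 : Fin (N+1))).powersetCard k,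
          PEnn N pIn pOff {g | introOutComp N g \ {0} = ↑c} := by
  unfold PEnn
  simp_rw [indicator_ncard_decomp N pIn pOff k]
  exact Summable.tsum_finsetSum (fun c _ => ENNReal.summable)
lemma WE_support (N : ℕ) (pIn pOff : ℕ → ℝ) (g : Fin (N+1) → List (Fin (N+1)))
    (hW : WE N pIn pOff g ≠ 0) : ∀ u, ∀ v ∈ g u, v ≠ 0 := by
  intro u v hv
  have hu : nodeW N pIn pOff u (g u) ≠ 0 := by
    intro h
    exact hW (by unfold WE; exact Finset.prod_eq_zero (Finset.mem_univ u) h)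
  unfold nodeW at hu
  split_ifs at hu with h1 h2 h3
  · exact h2 v hv
  · exact absurd rfl hu
  · exact (h3 v hv).2
  · exact absurd rfl hu

lemma indicator_AS_decomp (N : ℕ) (pIn pOff : ℕ → ℝ) (S : Finset (Fin (N+1)))
    (h0S : (0 : Fin (N+1)) ∉ S) (g : Fin (N+1) → List (Fin (N+1))) :
    Set.indicator {g | (∀ v ∈ g 0, v ∈ S) ∧ ∀ u ∈ S, ∀ v ∈ g u, v ∈ S} (WE N pIn pOff) g
      = ∑ c ∈ (Finset.univ.erase (0 : Fin (N+1))).powerset,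
          (if c ⊆ S then
            Set.indicator {g | introOutComp N g \ {0} = ↑c
              ∧ ∀ u ∈ S \ c, ∀ v ∈ g u, v ∈ S} (WE N pIn pOff) g
          else 0) := by
  classical
  have hfin : (introOutComp N g \ {0}).Finite := Set.toFinite _
  set c₀ := hfin.toFinset with hc₀
  have hcoe : (↑c₀ : Set (Fin (N+1))) = introOutComp N g \ {0} := hfin.coe_toFinset
  have hc₀mem : c₀ ∈ (Finset.univ.erase (0 : Fin (N+1))).powerset := by
    rw [Finset.mem_powerset]
    intro x hx
    have : x ∈ introOutComp N g \ {0} := by rw [← hcoe]; exact_mod_cast hx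
    exact Finset.mem_erase.mpr ⟨this.2, Finset.mem_univ x⟩
  have hsingle : (∑ c ∈ (Finset.univ.erase (0 : Fin (N+1))).powerset,
          (if c ⊆ S then
            Set.indicator {g | introOutComp N g \ {0} = ↑c
              ∧ ∀ u ∈ S \ c, ∀ v ∈ g u, v ∈ S} (WE N pIn pOff) g
          else 0))
      = (if c₀ ⊆ S then
            Set.indicator {g | introOutComp N g \ {0} = ↑c₀
              ∧ ∀ u ∈ S \ c₀, ∀ v ∈ g u, v ∈ S} (WE N pIn pOff) g
          else 0) := by
    refine Finset.sum_eq_single c₀ (fun b _ hb => ?_) (fun hc => absurd hc₀mem hc)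
    by_cases hbS : b ⊆ S
    · rw [if_pos hbS]
      refine Set.indicator_of_notMem (fun hgb => hb ?_) _
      have hbc : (↑b : Set (Fin (N+1))) = ↑c₀ := by rw [hcoe]; exact hgb.1.symm
      exact_mod_cast Finset.coe_injective hbc
    · rw [if_neg hbS]
  rw [hsingle]
  by_cases hW : WE N pIn pOff g = 0
  · by_cases hcS : c₀ ⊆ S
    · rw [if_pos hcS, Set.indicator_apply, Set.indicator_apply, hW]; simp
    · rw [if_neg hcS, Set.indicator_apply, hW]; simp
  · have hsupp := WE_support N pIn pOff g hW
    have keyiff : (g ∈ {g | (∀ v ∈ g 0, v ∈ S) ∧ ∀ u ∈ S, ∀ v ∈ g u, v ∈ S}) ↔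
        (c₀ ⊆ S ∧ g ∈ {g | introOutComp N g \ {0} = ↑c₀
          ∧ ∀ u ∈ S \ c₀, ∀ v ∈ g u, v ∈ S}) := by
      constructor
      · rintro ⟨hA0, hAS⟩
        have hreachS : ∀ v, Relation.ReflTransGen (fun a b => b ∈ g a) 0 v →
            v = 0 ∨ v ∈ S := by
          intro v hv
          induction hv with
          | refl => exact Or.inl rfl
          | tail hr hstep ih =>
            rcases ih with h | h
            · rw [h] at hstep
              exact Or.inr (hA0 _ hstep)
            · exact Or.inr (hAS _ h _ hstep)
        refine ⟨?_, hcoe.symm, fun u hu => hAS u (Finset.mem_sdiff.mp hu).1⟩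
        intro x hx
        have hx' : x ∈ introOutComp N g \ {0} := by rw [← hcoe]; exact_mod_cast hx
        exact (hreachS x hx'.1).resolve_left hx'.2
      · rintro ⟨hsub, hEc, hF⟩
        have hmemc₀ : ∀ v, v ∈ introOutComp N g → v ≠ 0 → v ∈ c₀ := by
          intro v hv hv0
          have hv' : v ∈ introOutComp N g \ {0} := ⟨hv, hv0⟩
          rw [← hcoe] at hv'
          exact_mod_cast hv'
        constructor
        · intro v hv
          have hvC : v ∈ introOutComp N g := Relation.ReflTransGen.refl.tail hv
          exact hsub (hmemc₀ v hvC (hsupp 0 v hv))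
        · intro u hu v hv
          by_cases huc : u ∈ c₀
          · have huC : u ∈ introOutComp N g := by
              have hu' : u ∈ introOutComp N g \ {0} := by
                rw [← hcoe]; exact_mod_cast huc
              exact hu'.1
            have hvC : v ∈ introOutComp N g := huC.tail hv
            exact hsub (hmemc₀ v hvC (hsupp u v hv))
          · exact hF u (Finset.mem_sdiff.mpr ⟨hu, huc⟩) v hv
    by_cases hcS : c₀ ⊆ S
    · rw [if_pos hcS]
      by_cases hA : g ∈ {g | (∀ v ∈ g 0, v ∈ S) ∧ ∀ u ∈ S, ∀ v ∈ g u, v ∈ S}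
      · rw [Set.indicator_of_mem hA, Set.indicator_of_mem (keyiff.mp hA).2]
      · rw [Set.indicator_of_notMem hA,
          Set.indicator_of_notMem (fun h => hA (keyiff.mpr ⟨hcS, h⟩))]
    · rw [if_neg hcS, Set.indicator_of_notMem (fun hA => hcS (keyiff.mp hA).1)]

lemma PEnn_AS_decomp (N : ℕ) (pIn pOff : ℕ → ℝ) (S : Finset (Fin (N+1)))
    (h0S : (0 : Fin (N+1)) ∉ S) :
    PEnn N pIn pOff {g | (∀ v ∈ g 0, v ∈ S) ∧ ∀ u ∈ S, ∀ v ∈ g u, v ∈ S}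
      = ∑ c ∈ (Finset.univ.erase (0 : Fin (N+1))).powerset,
          (if c ⊆ S then
            PEnn N pIn pOff {g | introOutComp N g \ {0} = ↑c
              ∧ ∀ u ∈ S \ c, ∀ v ∈ g u, v ∈ S}
          else 0) := by
  unfold PEnn
  simp_rw [indicator_AS_decomp N pIn pOff S h0S]
  rw [Summable.tsum_finsetSum (fun c _ => ENNReal.summable)]
  refine Finset.sum_congr rfl fun c _ => ?_
  by_cases hcS : c ⊆ S
  · simp only [if_pos hcS]
  · simp only [if_neg hcS, tsum_zero]
lemma PEnn_Gc (N : ℕ) (hN : 2 ≤ N) (pIn pOff : ℕ → ℝ)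
    (hIn0 : ∀ ℓ, 0 ≤ pIn ℓ) (hInsum : ∑' ℓ, pIn ℓ = 1)
    (hOff0 : ∀ ℓ, 0 ≤ pOff ℓ) (hOffsum : ∑' ℓ, pOff ℓ = 1)
    (S c : Finset (Fin (N+1))) (h0S : (0 : Fin (N+1)) ∉ S) (hcS : c ⊆ S) :
    PEnn N pIn pOff {g | introOutComp N g \ {0} = ↑c
        ∧ ∀ u ∈ S \ c, ∀ v ∈ g u, v ∈ S}
      = PEnn N pIn pOff {g | introOutComp N g \ {0} = ↑c}
        * ENNReal.ofReal (∑' n, pOff n * (((S.card:ℝ)-1)/((N:ℝ)-1))^n)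
          ^ (S.card - c.card) := by
  classical
  have hNR : (2:ℝ) ≤ (N:ℝ) := by exact_mod_cast hN
  have hd : (0:ℝ) < (N:ℝ) - 1 := by linarith
  set T : Finset (Fin (N+1)) := insert 0 c with hT
  have h0c : (0 : Fin (N+1)) ∉ c := fun h => h0S (hcS h)
  set Φ : (Fin (N+1) → List (Fin (N+1))) → ℝ≥0∞ := fun g =>
    (if introOutComp N g \ {0} = ↑c then (1:ℝ≥0∞) else 0)
      * ∏ i ∈ T, nodeW N pIn pOff i (g i) with hΦdef
  set f : Fin (N+1) → List (Fin (N+1)) → ℝ≥0∞ := fun i l =>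
    if i ∈ S then
      (if ∀ v ∈ l, v ∈ S.erase i then
        ENNReal.ofReal (pOff l.length * (1/((N:ℝ)-1)) ^ l.length) else 0)
    else nodeW N pIn pOff i l with hfdef
  set m : ℝ≥0∞ := ENNReal.ofReal (∑' n, pOff n * (((S.card:ℝ)-1)/((N:ℝ)-1))^n) with hm
  have hΦ : ∀ g g' : Fin (N+1) → List (Fin (N+1)), (∀ i ∈ T, g i = g' i) → Φ g = Φ g' := by
    intro g g' h
    have hagree : ∀ i, (i = 0 ∨ i ∈ c) → g i = g' i := fun i hi =>
      h i (Finset.mem_insert.mpr hi)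
    simp only [hΦdef]
    congr 1
    · rw [if_congr (outComp_event_local N c h0c g g' hagree) rfl rfl]
    · exact Finset.prod_congr rfl fun i hi => by rw [h i hi]
  have hpoint1 : ∀ g, Set.indicator {g | introOutComp N g \ {0} = ↑c
        ∧ ∀ u ∈ S \ c, ∀ v ∈ g u, v ∈ S} (WE N pIn pOff) g
      = Φ g * ∏ i ∈ Tᶜ, f i (g i) := by
    intro g
    by_cases hEc : introOutComp N g \ {0} = ↑c
    · by_cases hF : ∀ u ∈ S \ c, ∀ v ∈ g u, v ∈ S
      · rw [Set.indicator_of_mem (show g ∈ {g | introOutComp N g \ {0} = ↑c ∧ ∀ u ∈ S \ c, ∀ v ∈ g u, v ∈ S} from ⟨hEc, hF⟩)]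
        simp only [hΦdef]
        rw [if_pos hEc, one_mul]
        have hprod : ∏ i ∈ Tᶜ, f i (g i) = ∏ i ∈ Tᶜ, nodeW N pIn pOff i (g i) := by
          refine Finset.prod_congr rfl fun i hi => ?_
          have hi' := Finset.mem_compl.mp hi
          have hi0 : i ≠ 0 := fun h => hi' (h ▸ Finset.mem_insert_self 0 c)
          have hic : i ∉ c := fun h => hi' (Finset.mem_insert_of_mem h)
          simp only [hfdef]
          by_cases hiS : i ∈ S
          · rw [if_pos hiS, ← nodeW_restrict N pIn pOff i hi0 S h0S (g i),
              if_pos (hF i (Finset.mem_sdiff.mpr ⟨hiS, hic⟩)), mul_one]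
          · rw [if_neg hiS]
        rw [hprod, Finset.prod_mul_prod_compl T (fun i => nodeW N pIn pOff i (g i))]
        rfl
      · rw [Set.indicator_of_notMem (fun h => hF h.2)]
        push_neg at hF
        obtain ⟨u, hu, v0, hv0mem, hv0S⟩ := hF
        have hu' := Finset.mem_sdiff.mp hu
        have hu0 : u ≠ 0 := fun h => h0S (h ▸ hu'.1)
        have huT : u ∈ Tᶜ := Finset.mem_compl.mpr (fun h => by
          rcases Finset.mem_insert.mp h with h | h
          · exact hu0 h
          · exact hu'.2 h)
        have hfz : f u (g u) = 0 := by
          simp only [hfdef]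
          rw [if_pos hu'.1,
            if_neg (fun hall => hv0S (Finset.mem_of_mem_erase (hall v0 hv0mem)))]
        rw [Finset.prod_eq_zero huT hfz, mul_zero]
    · rw [Set.indicator_of_notMem (fun h => hEc h.1)]
      simp only [hΦdef]
      rw [if_neg hEc, zero_mul, zero_mul]
  have hpoint2 : ∀ g, Set.indicator {g | introOutComp N g \ {0} = ↑c} (WE N pIn pOff) g
      = Φ g * ∏ i ∈ Tᶜ, nodeW N pIn pOff i (g i) := by
    intro g
    by_cases hEc : introOutComp N g \ {0} = ↑c
    · rw [Set.indicator_of_mem (show g ∈ {g | introOutComp N g \ {0} = ↑c} from hEc)]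
      simp only [hΦdef]
      rw [if_pos hEc, one_mul,
        Finset.prod_mul_prod_compl T (fun i => nodeW N pIn pOff i (g i))]
      rfl
    · rw [Set.indicator_of_notMem
        (show g ∉ {g | introOutComp N g \ {0} = ↑c} from hEc)]
      simp only [hΦdef]
      rw [if_neg hEc, zero_mul, zero_mul]
  have hmass : ∀ i ∈ Tᶜ, (∑' l, f i l) = (if i ∈ S then m else 1) := by
    intro i hi
    have hi' := Finset.mem_compl.mp hi
    have hi0 : i ≠ 0 := fun h => hi' (h ▸ Finset.mem_insert_self 0 c)
    by_cases hiS : i ∈ S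
    · simp only [hfdef, if_pos hiS, hm]
      have hScard1 : 1 ≤ S.card := Finset.card_pos.mpr ⟨i, hiS⟩
      have hsubset : S.erase i ⊆ (Finset.univ.erase (0 : Fin (N+1))).erase i := by
        intro x hx
        have hx' := Finset.mem_erase.mp hx
        exact Finset.mem_erase.mpr ⟨hx'.1,
          Finset.mem_erase.mpr ⟨fun h => h0S (h ▸ hx'.2), Finset.mem_univ x⟩⟩
      have hcard2 : ((Finset.univ.erase (0 : Fin (N+1))).erase i).card = N - 1 := by
        rw [Finset.card_erase_of_mem
            (Finset.mem_erase.mpr ⟨hi0, Finset.mem_univ i⟩),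
          Finset.card_erase_of_mem (Finset.mem_univ _), Finset.card_univ, Fintype.card_fin]
        omega
      have hA : (((S.erase i).card : ℝ)) ≤ (N:ℝ) - 1 := by
        have h1 : (S.erase i).card ≤ N - 1 := hcard2 ▸ Finset.card_le_card hsubset
        have h2 : ((S.erase i).card : ℝ) ≤ ((N - 1 : ℕ) : ℝ) := by exact_mod_cast h1
        rwa [Nat.cast_sub (by omega), Nat.cast_one] at h2
      rw [tsum_list_mass pOff hOff0 (summable_of_tsum_one pOff hOffsum) ((N:ℝ)-1) hd
        (S.erase i) hA]
      congr 2
      funext n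
      rw [Finset.card_erase_of_mem hiS, Nat.cast_sub hScard1, Nat.cast_one]
    · simp only [hfdef, if_neg hiS]
      exact tsum_nodeW_total N hN pIn pOff hIn0 hInsum hOff0 hOffsum i
  have hprod_f : ∏ i ∈ Tᶜ, (∑' l, f i l) = m ^ (S.card - c.card) := by
    rw [Finset.prod_congr rfl hmass]
    rw [← Finset.prod_filter (fun i => i ∈ S) (fun _ => m)]
    have hfilter : Tᶜ.filter (fun i => i ∈ S) = S \ c := by
      ext i
      simp only [Finset.mem_filter, Finset.mem_compl, Finset.mem_sdiff, hT,
        Finset.mem_insert]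
      constructor
      · rintro ⟨h1, h2⟩
        exact ⟨h2, fun h => h1 (Or.inr h)⟩
      · rintro ⟨h1, h2⟩
        refine ⟨fun h => ?_, h1⟩
        rcases h with h | h
        · exact h0S (h ▸ h1)
        · exact h2 h
    rw [hfilter, Finset.prod_const, Finset.card_sdiff_of_subset hcS]
  have hprod_node : ∏ i ∈ Tᶜ, (∑' l : List (Fin (N+1)), nodeW N pIn pOff i l) = 1 :=
    Finset.prod_eq_one fun i _ =>
      tsum_nodeW_total N hN pIn pOff hIn0 hInsum hOff0 hOffsum i
  unfold PEnn
  rw [tsum_congr hpoint1, tsum_split T Φ hΦ f, hprod_f,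
    tsum_congr hpoint2, tsum_split T Φ hΦ (fun i l => nodeW N pIn pOff i l),
    hprod_node, mul_one]
lemma PEnn_AS_value (N : ℕ) (hN : 2 ≤ N) (pIn pOff : ℕ → ℝ)
    (hIn0 : ∀ ℓ, 0 ≤ pIn ℓ) (hInsum : ∑' ℓ, pIn ℓ = 1)
    (hOff0 : ∀ ℓ, 0 ≤ pOff ℓ) (hOffsum : ∑' ℓ, pOff ℓ = 1)
    (S : Finset (Fin (N+1))) (h0S : (0 : Fin (N+1)) ∉ S) :
    PEnn N pIn pOff {g | (∀ v ∈ g 0, v ∈ S) ∧ ∀ u ∈ S, ∀ v ∈ g u, v ∈ S}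
      = ENNReal.ofReal (∑' n, pIn n * ((S.card:ℝ)/(N:ℝ))^n)
        * ENNReal.ofReal (∑' n, pOff n * (((S.card:ℝ)-1)/((N:ℝ)-1))^n) ^ S.card := by
  classical
  have hNR : (2:ℝ) ≤ (N:ℝ) := by exact_mod_cast hN
  have hd : (0:ℝ) < (N:ℝ) - 1 := by linarith
  have hN0 : (0:ℝ) < (N:ℝ) := by linarith
  set fAS : Fin (N+1) → List (Fin (N+1)) → ℝ≥0∞ := fun u l =>
    if u = 0 then
      (if ∀ v ∈ l, v ∈ S then ENNReal.ofReal (pIn l.length * (1/(N:ℝ))^l.length) else 0)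
    else if u ∈ S then
      (if ∀ v ∈ l, v ∈ S.erase u then
        ENNReal.ofReal (pOff l.length * (1/((N:ℝ)-1))^l.length) else 0)
    else nodeW N pIn pOff u l with hfAS
  set m : ℝ≥0∞ := ENNReal.ofReal (∑' n, pOff n * (((S.card:ℝ)-1)/((N:ℝ)-1))^n) with hm
  have hpoint : ∀ g, Set.indicator
      {g | (∀ v ∈ g 0, v ∈ S) ∧ ∀ u ∈ S, ∀ v ∈ g u, v ∈ S} (WE N pIn pOff) g
      = ∏ u, fAS u (g u) := by
    intro g
    by_cases hA : g ∈ {g | (∀ v ∈ g 0, v ∈ S) ∧ ∀ u ∈ S, ∀ v ∈ g u, v ∈ S}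
    · rw [Set.indicator_of_mem hA]
      unfold WE
      refine Finset.prod_congr rfl fun u _ => ?_
      by_cases hu0 : u = 0
      · subst hu0
        simp only [hfAS]
        rw [if_pos trivial, ← nodeW_zero_restrict N pIn pOff S h0S (g 0),
          if_pos hA.1, mul_one]
      · by_cases huS : u ∈ S
        · simp only [hfAS]
          rw [if_neg hu0, if_pos huS, ← nodeW_restrict N pIn pOff u hu0 S h0S (g u),
            if_pos (hA.2 u huS), mul_one]
        · simp only [hfAS]
          rw [if_neg hu0, if_neg huS]
    · rw [Set.indicator_of_notMem hA]
      symm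
      rcases not_and_or.mp hA with h | h
      · refine Finset.prod_eq_zero (Finset.mem_univ 0) ?_
        simp only [hfAS]
        rw [if_pos trivial, if_neg h]
      · push_neg at h
        obtain ⟨u, huS, v0, hv0mem, hv0S⟩ := h
        have hu0 : u ≠ 0 := fun he => h0S (he ▸ huS)
        refine Finset.prod_eq_zero (Finset.mem_univ u) ?_
        simp only [hfAS]
        rw [if_neg hu0, if_pos huS,
          if_neg (fun hall => hv0S (Finset.mem_of_mem_erase (hall v0 hv0mem)))]
  unfold PEnn
  rw [tsum_congr hpoint, tsum_pi_prod fAS,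
    ← Finset.mul_prod_erase Finset.univ (fun u => ∑' l, fAS u l) (Finset.mem_univ 0)]
  have hScard : (S.card : ℝ) ≤ (N:ℝ) := by
    have h1 : S ⊆ Finset.univ.erase (0 : Fin (N+1)) := fun x hx =>
      Finset.mem_erase.mpr ⟨fun h => h0S (h ▸ hx), Finset.mem_univ x⟩
    have h2 : S.card ≤ N := by
      have := Finset.card_le_card h1
      rwa [Finset.card_erase_of_mem (Finset.mem_univ _), Finset.card_univ,
        Fintype.card_fin, Nat.add_sub_cancel] at this
    exact_mod_cast h2
  congr 1
  · -- node 0 mass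
    have h0eq : ∀ l : List (Fin (N+1)), fAS 0 l =
        (if ∀ v ∈ l, v ∈ S then
          ENNReal.ofReal (pIn l.length * (1/(N:ℝ))^l.length) else 0) := by
      intro l
      simp only [hfAS]
      rw [if_pos trivial]
    rw [tsum_congr h0eq,
      tsum_list_mass pIn hIn0 (summable_of_tsum_one pIn hInsum) (N:ℝ) hN0 S hScard]
  · -- offspring masses
    have hmass : ∀ u ∈ Finset.univ.erase (0 : Fin (N+1)),
        (∑' l, fAS u l) = (if u ∈ S then m else 1) := by
      intro u hu
      have hu0 : u ≠ 0 := (Finset.mem_erase.mp hu).1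
      by_cases huS : u ∈ S
      · have hueq : ∀ l : List (Fin (N+1)), fAS u l =
            (if ∀ v ∈ l, v ∈ S.erase u then
              ENNReal.ofReal (pOff l.length * (1/((N:ℝ)-1))^l.length) else 0) := by
          intro l
          simp only [hfAS]
          rw [if_neg hu0, if_pos huS]
        rw [if_pos huS, tsum_congr hueq, hm]
        have hScard1 : 1 ≤ S.card := Finset.card_pos.mpr ⟨u, huS⟩
        have hsubset : S.erase u ⊆ (Finset.univ.erase (0 : Fin (N+1))).erase u := by
          intro x hx
          have hx' := Finset.mem_erase.mp hx
          exact Finset.mem_erase.mpr ⟨hx'.1,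
            Finset.mem_erase.mpr ⟨fun h => h0S (h ▸ hx'.2), Finset.mem_univ x⟩⟩
        have hcard2 : ((Finset.univ.erase (0 : Fin (N+1))).erase u).card = N - 1 := by
          rw [Finset.card_erase_of_mem
              (Finset.mem_erase.mpr ⟨hu0, Finset.mem_univ u⟩),
            Finset.card_erase_of_mem (Finset.mem_univ _), Finset.card_univ,
            Fintype.card_fin]
          omega
        have hA : (((S.erase u).card : ℝ)) ≤ (N:ℝ) - 1 := by
          have h1 : (S.erase u).card ≤ N - 1 := hcard2 ▸ Finset.card_le_card hsubset
          have h2 : ((S.erase u).card : ℝ) ≤ ((N - 1 : ℕ) : ℝ) := by exact_mod_cast h1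
          rwa [Nat.cast_sub (by omega), Nat.cast_one] at h2
        rw [tsum_list_mass pOff hOff0 (summable_of_tsum_one pOff hOffsum)
          ((N:ℝ)-1) hd (S.erase u) hA]
        congr 2
        funext n
        rw [Finset.card_erase_of_mem huS, Nat.cast_sub hScard1, Nat.cast_one]
      · have hueq : ∀ l : List (Fin (N+1)), fAS u l = nodeW N pIn pOff u l := by
          intro l
          simp only [hfAS]
          rw [if_neg hu0, if_neg huS]
        rw [if_neg huS, tsum_congr hueq]
        exact tsum_nodeW_total N hN pIn pOff hIn0 hInsum hOff0 hOffsum u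
    rw [Finset.prod_congr rfl hmass,
      ← Finset.prod_filter (fun u => u ∈ S) (fun _ => m)]
    have hfilter : (Finset.univ.erase (0 : Fin (N+1))).filter (fun u => u ∈ S) = S := by
      ext u
      rw [Finset.mem_filter, Finset.mem_erase]
      constructor
      · rintro ⟨_, h⟩; exact h
      · intro h
        exact ⟨⟨fun he => h0S (by rwa [he] at h), Finset.mem_univ u⟩, h⟩
    rw [hfilter, Finset.prod_const]
lemma choose_prod_ratio (M N k : ℕ) (hkM : k ≤ M) (hMN : M ≤ N) :
    (N.choose k : ℝ) * ∏ j ∈ Finset.range k, (((M:ℝ) - j)/((N:ℝ) - j))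
      = (M.choose k : ℝ) := by
  have hMd : ∏ j ∈ Finset.range k, ((M:ℝ) - j) = (M.descFactorial k : ℝ) := by
    rw [Nat.descFactorial_eq_prod_range, Nat.cast_prod]
    refine Finset.prod_congr rfl fun j hj => ?_
    rw [Nat.cast_sub (le_of_lt (lt_of_lt_of_le (Finset.mem_range.mp hj) hkM))]
  have hNd : ∏ j ∈ Finset.range k, ((N:ℝ) - j) = (N.descFactorial k : ℝ) := by
    rw [Nat.descFactorial_eq_prod_range, Nat.cast_prod]
    refine Finset.prod_congr rfl fun j hj => ?_
    rw [Nat.cast_sub (le_of_lt (lt_of_lt_of_le (Finset.mem_range.mp hj) (hkM.trans hMN)))]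
  have hprod : ∏ j ∈ Finset.range k, (((M:ℝ) - j)/((N:ℝ) - j))
      = (M.descFactorial k : ℝ)/(N.descFactorial k : ℝ) := by
    rw [Finset.prod_div_distrib, hMd, hNd]
  rw [hprod, Nat.descFactorial_eq_factorial_mul_choose,
    Nat.descFactorial_eq_factorial_mul_choose]
  have hk0 : (k.factorial : ℝ) ≠ 0 := by
    exact_mod_cast (Nat.factorial_pos k).ne'
  have hNc0 : (N.choose k : ℝ) ≠ 0 :=
    Nat.cast_ne_zero.mpr (Nat.choose_pos (hkM.trans hMN)).ne'
  push_cast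
  field_simp
theorem multiple_introductions_triangular_system
    (N : ℕ) (hN : 2 ≤ N) (pIn pOff : ℕ → ℝ)
    (hIn0 : ∀ ℓ, 0 ≤ pIn ℓ) (hIn1 : ∀ ℓ, pIn ℓ ≤ 1) (hInsum : ∑' ℓ, pIn ℓ = 1)
    (hOff0 : ∀ ℓ, 0 ≤ pOff ℓ) (hOff1 : ∀ ℓ, pOff ℓ ≤ 1) (hOffsum : ∑' ℓ, pOff ℓ = 1)
    (χ : ℝ → ℝ) (hχ : ∀ x, χ x = ∑' ℓ, pIn ℓ * x ^ ℓ)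
    (μ : ℝ → ℝ) (hμ : ∀ x, μ x = ∑' ℓ, pOff ℓ * x ^ ℓ)
    (M : ℕ) (hM1 : 1 ≤ M) (hMN : M ≤ N) :
    χ ((M : ℝ) / (N : ℝ)) * (μ (((M : ℝ) - 1) / ((N : ℝ) - 1))) ^ M =
      ∑ k ∈ Finset.range (M + 1),
        introQProb N pIn pOff k *
          (μ (((M : ℝ) - 1) / ((N : ℝ) - 1))) ^ (M - k) *
          ∏ j ∈ Finset.range k, (((M : ℝ) - j) / ((N : ℝ) - j)) := by
  classical
  have hNR : (2:ℝ) ≤ (N:ℝ) := by exact_mod_cast hN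
  have hMR : (1:ℝ) ≤ (M:ℝ) := by exact_mod_cast hM1
  have hy0 : (0:ℝ) ≤ ((M:ℝ) - 1) / ((N:ℝ) - 1) := by
    apply div_nonneg <;> linarith
  have hx0 : (0:ℝ) ≤ (M:ℝ)/(N:ℝ) := by positivity
  have hχnn : 0 ≤ χ ((M:ℝ)/(N:ℝ)) := by
    rw [hχ]
    exact tsum_nonneg (fun n => mul_nonneg (hIn0 n) (pow_nonneg hx0 n))
  have hμnn : 0 ≤ μ (((M:ℝ) - 1) / ((N:ℝ) - 1)) := by
    rw [hμ]
    exact tsum_nonneg (fun n => mul_nonneg (hOff0 n) (pow_nonneg hy0 n))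
  -- construction of the reference set S of size M not containing 0
  set f : ℕ → Fin (N+1) := fun i => ⟨(i+1) % (N+1), Nat.mod_lt _ (Nat.succ_pos N)⟩ with hf
  have hval : ∀ i, i < M → (f i).val = i + 1 := by
    intro i hi
    simp only [hf]
    exact Nat.mod_eq_of_lt (by omega)
  set S : Finset (Fin (N+1)) := (Finset.range M).image f with hS
  have hScard : S.card = M := by
    rw [hS, Finset.card_image_of_injOn, Finset.card_range]
    intro i hi j hj hij
    simp only [Finset.coe_range, Set.mem_Iio] at hi hj
    have h1 := hval i hi
    have h2 := hval j hj
    have h3 := congrArg Fin.val hij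
    rw [h1, h2] at h3
    omega
  have h0S : (0 : Fin (N+1)) ∉ S := by
    intro h
    obtain ⟨i, hi, he⟩ := Finset.mem_image.mp h
    have h1 := hval i (Finset.mem_range.mp hi)
    have h2 := congrArg Fin.val he
    rw [h1] at h2
    simp at h2
  -- Step 1: value of P(A_S)
  have h1 := PEnn_AS_value N hN pIn pOff hIn0 hInsum hOff0 hOffsum S h0S
  rw [hScard, ← hχ, ← hμ] at h1
  -- Step 2: decomposition over out-components
  have h2 := PEnn_AS_decomp N pIn pOff S h0S
  have hsub : S.powerset ⊆ (Finset.univ.erase (0 : Fin (N+1))).powerset := by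
    intro c hc
    rw [Finset.mem_powerset] at hc ⊢
    intro x hx
    exact Finset.mem_erase.mpr ⟨fun h => h0S (h ▸ hc hx), Finset.mem_univ x⟩
  have hout : ∀ c ∈ (Finset.univ.erase (0 : Fin (N+1))).powerset, c ∉ S.powerset →
      (if c ⊆ S then
        PEnn N pIn pOff {g | introOutComp N g \ {0} = ↑c
          ∧ ∀ u ∈ S \ c, ∀ v ∈ g u, v ∈ S}
      else 0) = 0 := by
    intro c _ hc
    exact if_neg (fun hcS => hc (Finset.mem_powerset.mpr hcS))
  rw [← Finset.sum_subset hsub hout] at h2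
  -- Step 3: conditional independence factorization
  have h3 : PEnn N pIn pOff
      {g | (∀ v ∈ g 0, v ∈ S) ∧ ∀ u ∈ S, ∀ v ∈ g u, v ∈ S}
      = ∑ c ∈ S.powerset, PEnn N pIn pOff {g | introOutComp N g \ {0} = ↑c}
          * ENNReal.ofReal (μ (((M:ℝ) - 1) / ((N:ℝ) - 1))) ^ (M - c.card) := by
    rw [h2]
    refine Finset.sum_congr rfl fun c hc => ?_
    have hcS : c ⊆ S := Finset.mem_powerset.mp hc
    rw [if_pos hcS]
    have h4 := PEnn_Gc N hN pIn pOff hIn0 hInsum hOff0 hOffsum S c h0S hcS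
    rw [hScard, ← hμ] at h4
    exact h4
  rw [Finset.sum_powerset, hScard] at h3
  -- Step 4: regroup by cardinality
  have key : ENNReal.ofReal (χ ((M:ℝ)/(N:ℝ)))
      * ENNReal.ofReal (μ (((M:ℝ) - 1) / ((N:ℝ) - 1))) ^ M
      = ∑ k ∈ Finset.range (M+1),
          (∑ c ∈ Finset.powersetCard k S,
            PEnn N pIn pOff {g | introOutComp N g \ {0} = ↑c})
          * ENNReal.ofReal (μ (((M:ℝ) - 1) / ((N:ℝ) - 1))) ^ (M - k) := by
    rw [← h1, h3]
    refine Finset.sum_congr rfl fun k _ => ?_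
    rw [Finset.sum_mul]
    refine Finset.sum_congr rfl fun c hc => ?_
    rw [(Finset.mem_powersetCard.mp hc).2]
  -- Step 5: convert to the real statement
  have hfinite : ∀ k ∈ Finset.range (M+1),
      (∑ c ∈ Finset.powersetCard k S,
        PEnn N pIn pOff {g | introOutComp N g \ {0} = ↑c})
      * ENNReal.ofReal (μ (((M:ℝ) - 1) / ((N:ℝ) - 1))) ^ (M - k) ≠ ⊤ := by
    intro k _
    refine ENNReal.mul_ne_top ?_ (ENNReal.pow_ne_top ENNReal.ofReal_ne_top)
    refine (ENNReal.sum_lt_top.mpr fun c _ => lt_of_le_of_lt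
      (PEnn_le_one N hN pIn pOff hIn0 hInsum hOff0 hOffsum _) ?_).ne
    exact ENNReal.one_lt_top
  have hLHS : χ ((M:ℝ)/(N:ℝ)) * (μ (((M:ℝ) - 1) / ((N:ℝ) - 1))) ^ M
      = (ENNReal.ofReal (χ ((M:ℝ)/(N:ℝ)))
          * ENNReal.ofReal (μ (((M:ℝ) - 1) / ((N:ℝ) - 1))) ^ M).toReal := by
    rw [ENNReal.toReal_mul, ENNReal.toReal_pow, ENNReal.toReal_ofReal hχnn,
      ENNReal.toReal_ofReal hμnn]
  rw [hLHS, key, ENNReal.toReal_sum hfinite]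
  refine Finset.sum_congr rfl fun k hk => ?_
  have hkM : k ≤ M := Nat.lt_succ_iff.mp (Finset.mem_range.mp hk)
  obtain ⟨cref, hcrefS, hcrefcard⟩ := Finset.exists_subset_card_eq
    (show k ≤ S.card by rw [hScard]; exact hkM)
  have h0cref : (0 : Fin (N+1)) ∉ cref := fun h => h0S (hcrefS h)
  have hsymm_S : ∑ c ∈ Finset.powersetCard k S,
      PEnn N pIn pOff {g | introOutComp N g \ {0} = ↑c}
      = (M.choose k : ℝ≥0∞) * PEnn N pIn pOff {g | introOutComp N g \ {0} = ↑cref} := by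
    have hconst : ∀ c ∈ Finset.powersetCard k S,
        PEnn N pIn pOff {g | introOutComp N g \ {0} = ↑c}
        = PEnn N pIn pOff {g | introOutComp N g \ {0} = ↑cref} := by
      intro c hc
      obtain ⟨hcsub, hccard⟩ := Finset.mem_powersetCard.mp hc
      exact PEnn_comp_symm N pIn pOff c cref (fun h => h0S (hcsub h)) h0cref
        (hccard.trans hcrefcard.symm)
    rw [Finset.sum_congr rfl hconst, Finset.sum_const, Finset.card_powersetCard,
      hScard, nsmul_eq_mul]
  have hsymm_N : PEnn N pIn pOff {g | ((introOutComp N g) \ {0}).ncard = k}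
      = (N.choose k : ℝ≥0∞) * PEnn N pIn pOff {g | introOutComp N g \ {0} = ↑cref} := by
    rw [PEnn_ncard_decomp N pIn pOff k]
    have hconst : ∀ c ∈ (Finset.univ.erase (0 : Fin (N+1))).powersetCard k,
        PEnn N pIn pOff {g | introOutComp N g \ {0} = ↑c}
        = PEnn N pIn pOff {g | introOutComp N g \ {0} = ↑cref} := by
      intro c hc
      obtain ⟨hcsub, hccard⟩ := Finset.mem_powersetCard.mp hc
      have h0c : (0 : Fin (N+1)) ∉ c := fun h => (Finset.mem_erase.mp (hcsub h)).1 rfl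
      exact PEnn_comp_symm N pIn pOff c cref h0c h0cref (hccard.trans hcrefcard.symm)
    rw [Finset.sum_congr rfl hconst, Finset.sum_const, Finset.card_powersetCard,
      nsmul_eq_mul, Finset.card_erase_of_mem (Finset.mem_univ _), Finset.card_univ,
      Fintype.card_fin, Nat.add_sub_cancel]
  have hq : introQProb N pIn pOff k
      = (N.choose k : ℝ)
        * (PEnn N pIn pOff {g | introOutComp N g \ {0} = ↑cref}).toReal := by
    have hq1 : introQProb N pIn pOff k
        = (PEnn N pIn pOff {g | ((introOutComp N g) \ {0}).ncard = k}).toReal :=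
      introProb_eq_toReal N hN pIn pOff hIn0 hOff0 _
    rw [hq1, hsymm_N, ENNReal.toReal_mul]
    simp
  rw [hsymm_S, ENNReal.toReal_mul, ENNReal.toReal_mul, ENNReal.toReal_pow,
    ENNReal.toReal_ofReal hμnn, hq]
  have hMk : ((M.choose k : ℝ≥0∞)).toReal = (M.choose k : ℝ) := by simp
  rw [hMk]
  have hcpr := choose_prod_ratio M N k hkM hMN
  rw [← hcpr]
  ring
end

section
/- Let λ ≥ 0 be real and n ≥ 1 an integer. Draw L from the Poisson distribution with mean λ, then throw L balls independently and uniformly at random into n boxes. Then the number of boxes containing at least one ball has the binomial distribution with n trials and success probability 1 - e^{-λ/n}. -/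
open scoped Classical

/-- The Poisson probability mass function with mean `lam`. -/
noncomputable def poissonPMF (lam : ℝ) (k : ℕ) : ℝ :=
  Real.exp (-lam) * lam ^ k / (k.factorial : ℝ)

/-- The probability that throwing `L` balls independently and uniformly at random into
`n` boxes results in exactly `m` distinct nonempty boxes: the number of functions
`Fin L → Fin n` whose range has size `m`, divided by `n ^ L`. -/
noncomputable def distinctBoxesProb (n L m : ℕ) : ℝ :=
  ((Finset.univ.filter (fun f : Fin L → Fin n =>
      (Finset.univ.image f).card = m)).card : ℝ) / (n : ℝ) ^ L

open Finset

lemma count_image_subset (n L : ℕ) (S : Finset (Fin n)) :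
    (Finset.univ.filter (fun f : Fin L → Fin n => Finset.univ.image f ⊆ S)).card
      = S.card ^ L := by
  have h : (Finset.univ.filter (fun f : Fin L → Fin n => Finset.univ.image f ⊆ S))
      = Fintype.piFinset (fun _ : Fin L => S) := by
    ext f
    simp [Fintype.mem_piFinset, Finset.image_subset_iff]
  rw [h, Fintype.card_piFinset]
  simp

lemma count_image_eq_sum (n L : ℕ) (S : Finset (Fin n)) :
    ∑ T ∈ S.powerset,
        ((Finset.univ.filter (fun f : Fin L → Fin n => Finset.univ.image f = T)).card)
      = S.card ^ L := by
  rw [← count_image_subset n L S]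
  rw [Finset.card_eq_sum_card_fiberwise
    (f := fun f : Fin L → Fin n => Finset.univ.image f) (t := S.powerset)
    (fun f hf => Finset.mem_powerset.2 (Finset.mem_filter.1 hf).2)]
  refine Finset.sum_congr rfl fun T hT => ?_
  congr 1
  rw [Finset.filter_filter]
  apply Finset.filter_congr
  intro f _
  simp only [Finset.mem_powerset] at hT
  constructor
  · exact fun h => ⟨show Finset.univ.image f ⊆ S from h ▸ hT, h⟩
  · exact fun h => h.2

lemma neg_one_pow_sub_real (a b : ℕ) (h : b ≤ a) :
    (-1 : ℝ) ^ (a - b) = (-1) ^ a * (-1) ^ b := by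
  have h2 : (-1:ℝ)^(a-b) * (-1)^b = (-1)^a := by
    rw [← pow_add, Nat.sub_add_cancel h]
  have hb : (-1:ℝ)^b * (-1)^b = 1 := by
    rw [← pow_add, ← two_mul, pow_mul]; norm_num
  calc (-1:ℝ)^(a-b) = (-1:ℝ)^(a-b) * ((-1)^b * (-1)^b) := by rw [hb, mul_one]
    _ = (-1)^a * (-1)^b := by rw [← mul_assoc, h2]

lemma sum_powerset_neg_one_pow_card_real {α : Type*} [DecidableEq α] (x : Finset α) :
    ∑ m ∈ x.powerset, (-1 : ℝ) ^ m.card = if x = ∅ then 1 else 0 := by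
  have := Finset.sum_powerset_neg_one_pow_card (x := x)
  have h2 : ((∑ m ∈ x.powerset, (-1 : ℤ) ^ m.card : ℤ) : ℝ)
      = ∑ m ∈ x.powerset, (-1 : ℝ) ^ m.card := by push_cast; rfl
  rw [← h2, this]
  split_ifs <;> norm_num

lemma sum_indicator_subsets {α : Type*} [DecidableEq α] (S U : Finset α) (hU : U ⊆ S) :
    ∑ T ∈ S.powerset.filter (fun T => U ⊆ T), (-1 : ℝ) ^ (S.card - T.card)
      = if U = S then 1 else 0 := by
  have key : ∑ T ∈ S.powerset.filter (fun T => U ⊆ T), (-1 : ℝ) ^ (S.card - T.card)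
      = ∑ V ∈ (S \ U).powerset, (-1 : ℝ) ^ (S.card - (U ∪ V).card) := by
    refine Finset.sum_nbij' (fun T => T \ U) (fun V => U ∪ V) ?_ ?_ ?_ ?_ ?_
    · intro T hT
      simp only [mem_filter, mem_powerset] at hT
      exact Finset.mem_powerset.2 (Finset.sdiff_subset_sdiff hT.1 le_rfl)
    · intro V hV
      simp only [mem_powerset] at hV
      refine Finset.mem_filter.2 ⟨Finset.mem_powerset.2 ?_, Finset.subset_union_left⟩
      exact Finset.union_subset hU (hV.trans (Finset.sdiff_subset))
    · intro T hT
      simp only [mem_filter, mem_powerset] at hT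
      exact Finset.union_sdiff_of_subset hT.2
    · intro V hV
      simp only [mem_powerset] at hV
      show (U ∪ V) \ U = V
      rw [Finset.union_sdiff_cancel_left]
      exact Finset.disjoint_left.2 fun a ha hav => (Finset.mem_sdiff.1 (hV hav)).2 ha
    · intro T hT
      simp only [mem_filter, mem_powerset] at hT
      rw [Finset.union_comm, Finset.sdiff_union_of_subset hT.2]
  rw [key]
  have hcard : ∀ V ∈ (S \ U).powerset, (U ∪ V).card = U.card + V.card := by
    intro V hV
    simp only [mem_powerset] at hV
    refine Finset.card_union_of_disjoint ?_
    exact Finset.disjoint_left.2 fun a ha hav => (Finset.mem_sdiff.1 (hV hav)).2 ha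
  have hSU : (S \ U).card = S.card - U.card := Finset.card_sdiff_of_subset hU
  calc ∑ V ∈ (S \ U).powerset, (-1 : ℝ) ^ (S.card - (U ∪ V).card)
      = ∑ V ∈ (S \ U).powerset, (-1 : ℝ) ^ (S.card - U.card) * (-1 : ℝ) ^ V.card := by
        refine Finset.sum_congr rfl fun V hV => ?_
        rw [hcard V hV, Nat.sub_add_eq]
        have hVle : V.card ≤ S.card - U.card := by
          rw [← hSU]; exact Finset.card_le_card (Finset.mem_powerset.1 hV)
        rw [neg_one_pow_sub_real _ _ hVle]
    _ = (-1 : ℝ) ^ (S.card - U.card) * ∑ V ∈ (S \ U).powerset, (-1 : ℝ) ^ V.card := by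
        rw [Finset.mul_sum]
    _ = if U = S then 1 else 0 := by
        rw [sum_powerset_neg_one_pow_card_real]
        by_cases h : U = S
        · subst h; simp
        · have : ¬ S \ U = ∅ := by
            intro he
            exact h (Finset.Subset.antisymm hU (Finset.sdiff_eq_empty_iff_subset.1 he))
          simp [h, this]

lemma moebius_powerset {α : Type*} [DecidableEq α] (f : Finset α → ℝ) (S : Finset α) :
    ∑ T ∈ S.powerset, (-1 : ℝ) ^ (S.card - T.card) * (∑ U ∈ T.powerset, f U) = f S := by
  have step1 : ∀ T ∈ S.powerset,
      (-1 : ℝ) ^ (S.card - T.card) * (∑ U ∈ T.powerset, f U)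
        = ∑ U ∈ S.powerset, if U ⊆ T then (-1 : ℝ) ^ (S.card - T.card) * f U else 0 := by
    intro T hT
    simp only [mem_powerset] at hT
    rw [Finset.sum_ite, Finset.sum_const_zero, add_zero, ← Finset.mul_sum]
    congr 1
    refine Finset.sum_congr ?_ (fun _ _ => rfl)
    ext U
    simp only [mem_filter, mem_powerset]
    exact ⟨fun h => ⟨h.trans hT, h⟩, fun h => h.2⟩
  rw [Finset.sum_congr rfl step1, Finset.sum_comm]
  have step2 : ∀ U ∈ S.powerset,
      (∑ T ∈ S.powerset, if U ⊆ T then (-1 : ℝ) ^ (S.card - T.card) * f U else 0)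
        = f U * (if U = S then 1 else 0) := by
    intro U hU
    simp only [mem_powerset] at hU
    rw [← sum_indicator_subsets S U hU, Finset.sum_filter, Finset.mul_sum]
    refine Finset.sum_congr rfl fun T hT => ?_
    split_ifs <;> ring
  rw [Finset.sum_congr rfl step2]
  simp only [mul_ite, mul_one, mul_zero]
  rw [Finset.sum_ite_eq' S.powerset S f]
  simp

lemma count_eq_as_alt (n L : ℕ) (S : Finset (Fin n)) :
    ((Finset.univ.filter (fun f : Fin L → Fin n => Finset.univ.image f = S)).card : ℝ)
      = ∑ T ∈ S.powerset, (-1 : ℝ) ^ (S.card - T.card) * (T.card : ℝ) ^ L := by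
  have h := moebius_powerset (fun T =>
    ((Finset.univ.filter (fun f : Fin L → Fin n => Finset.univ.image f = T)).card : ℝ)) S
  rw [← h]
  refine Finset.sum_congr rfl fun T _ => ?_
  congr 1
  rw [show (∑ U ∈ T.powerset,
      ((Finset.univ.filter (fun f : Fin L → Fin n => Finset.univ.image f = U)).card : ℝ))
    = ((∑ U ∈ T.powerset,
      ((Finset.univ.filter (fun f : Fin L → Fin n => Finset.univ.image f = U)).card) : ℕ) : ℝ)
    by push_cast; rfl]
  rw [count_image_eq_sum n L T]
  push_cast; rfl

lemma count_card_eq (n L m : ℕ) :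
    ((Finset.univ.filter (fun f : Fin L → Fin n => (Finset.univ.image f).card = m)).card : ℝ)
      = ∑ S ∈ Finset.powersetCard m (Finset.univ : Finset (Fin n)),
          ((Finset.univ.filter (fun f : Fin L → Fin n => Finset.univ.image f = S)).card : ℝ) := by
  rw [show (∑ S ∈ Finset.powersetCard m (Finset.univ : Finset (Fin n)),
      ((Finset.univ.filter (fun f : Fin L → Fin n => Finset.univ.image f = S)).card : ℝ))
    = ((∑ S ∈ Finset.powersetCard m (Finset.univ : Finset (Fin n)),
      ((Finset.univ.filter (fun f : Fin L → Fin n => Finset.univ.image f = S)).card) : ℕ) : ℝ)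
    by push_cast; rfl]
  congr 1
  rw [Finset.card_eq_sum_card_fiberwise
    (f := fun f : Fin L → Fin n => Finset.univ.image f)
    (t := Finset.powersetCard m Finset.univ)
    (fun f hf => Finset.mem_powersetCard_univ.2 (Finset.mem_filter.1 hf).2)]
  refine Finset.sum_congr rfl fun S hS => ?_
  congr 1
  rw [Finset.filter_filter]
  apply Finset.filter_congr
  intro f _
  have hSm := Finset.mem_powersetCard_univ.1 hS
  constructor
  · exact fun h => h.2
  · exact fun h => ⟨by simp only []; rw [h]; exact hSm, h⟩

theorem poisson_balls_occupied_boxes_binomial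
    (lam : ℝ) (hlam : 0 ≤ lam) (n : ℕ) (hn : 1 ≤ n) (m : ℕ) :
    ∑' L : ℕ, poissonPMF lam L * distinctBoxesProb n L m =
      (n.choose m : ℝ) * (1 - Real.exp (-lam / n)) ^ m *
        (1 - (1 - Real.exp (-lam / n))) ^ (n - m) := by
  by_cases hm : m ≤ n
  case neg =>
    push_neg at hm
    have h1 : ∀ L : ℕ, poissonPMF lam L * distinctBoxesProb n L m = 0 := by
      intro L
      have : (Finset.univ.filter (fun f : Fin L → Fin n =>
          (Finset.univ.image f).card = m)) = ∅ := by
        refine Finset.filter_false_of_mem fun f _ => ?_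
        intro h
        have : (Finset.univ.image f).card ≤ n := by
          simpa using Finset.card_le_card (Finset.subset_univ (Finset.univ.image f))
        omega
      simp [distinctBoxesProb, this]
    rw [tsum_congr h1, tsum_zero, Nat.choose_eq_zero_of_lt hm]
    simp
  case pos =>
  have hn0 : (0:ℝ) < n := by exact_mod_cast Nat.lt_of_lt_of_le Nat.zero_lt_one hn
  set c : ℝ := Real.exp (-lam / n) with hc
  set 𝒮 := Finset.powersetCard m (Finset.univ : Finset (Fin n)) with h𝒮
  set G : Finset (Fin n) → Finset (Fin n) → ℕ → ℝ := fun S T L =>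
    ((-1 : ℝ) ^ (S.card - T.card) * Real.exp (-lam)) *
      ((lam * T.card / n) ^ L / (L.factorial : ℝ)) with hG
  have hpt : ∀ L : ℕ, poissonPMF lam L * distinctBoxesProb n L m
      = ∑ S ∈ 𝒮, ∑ T ∈ S.powerset, G S T L := by
    intro L
    unfold poissonPMF distinctBoxesProb
    rw [count_card_eq, Finset.sum_div, Finset.mul_sum]
    refine Finset.sum_congr rfl fun S _ => ?_
    rw [count_eq_as_alt, Finset.sum_div, Finset.mul_sum]
    refine Finset.sum_congr rfl fun T _ => ?_
    simp only [hG, div_pow, mul_pow]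
    have hnL : ((n:ℝ)) ^ L ≠ 0 := pow_ne_zero _ (ne_of_gt hn0)
    field_simp
  have hGsum : ∀ S T : Finset (Fin n), Summable (G S T) := fun S T =>
    (Real.summable_pow_div_factorial (lam * T.card / n)).mul_left _
  have hGtsum : ∀ S T : Finset (Fin n), ∑' L, G S T L
      = ((-1 : ℝ) ^ (S.card - T.card) * Real.exp (-lam)) * Real.exp (lam * T.card / n) := by
    intro S T
    rw [hG]
    simp only []
    rw [tsum_mul_left]
    congr 1
    rw [Real.exp_eq_exp_ℝ, NormedSpace.exp_eq_tsum_div]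
  rw [tsum_congr hpt]
  rw [Summable.tsum_finsetSum (fun S _ => summable_sum fun T _ => hGsum S T)]
  have hswap : ∀ S ∈ 𝒮, ∑' L, ∑ T ∈ S.powerset, G S T L
      = ∑ T ∈ S.powerset, ((-1 : ℝ) ^ (S.card - T.card) * Real.exp (-lam))
          * Real.exp (lam * T.card / n) := by
    intro S _
    rw [Summable.tsum_finsetSum (fun T _ => hGsum S T)]
    exact Finset.sum_congr rfl fun T _ => hGtsum S T
  rw [Finset.sum_congr rfl hswap]
  have hterm : ∀ S ∈ 𝒮, ∀ T ∈ S.powerset,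
      ((-1 : ℝ) ^ (S.card - T.card) * Real.exp (-lam)) * Real.exp (lam * T.card / n)
        = (-1 : ℝ) ^ (m - T.card) * c ^ (n - T.card) := by
    intro S hS T hT
    have hSm : S.card = m := Finset.mem_powersetCard_univ.1 hS
    have hTn : T.card ≤ n := le_trans (Finset.card_le_card (Finset.subset_univ T))
      (by simp)
    rw [hSm, mul_assoc]
    congr 1
    rw [hc, ← Real.exp_nat_mul, ← Real.exp_add]
    congr 1
    rw [Nat.cast_sub hTn]
    field_simp
    ring
  have hinner : ∀ S ∈ 𝒮, ∑ T ∈ S.powerset,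
      ((-1 : ℝ) ^ (S.card - T.card) * Real.exp (-lam)) * Real.exp (lam * T.card / n)
        = (1 - c) ^ m * c ^ (n - m) := by
    intro S hS
    rw [Finset.sum_congr rfl (hterm S hS)]
    have hSm : S.card = m := Finset.mem_powersetCard_univ.1 hS
    rw [Finset.sum_powerset_apply_card (fun j => (-1 : ℝ) ^ (m - j) * c ^ (n - j)), hSm]
    have hbin : (1 - c) ^ m = ∑ j ∈ Finset.range (m + 1),
        (1:ℝ) ^ j * (-c) ^ (m - j) * (m.choose j : ℝ) := by
      rw [show (1 : ℝ) - c = 1 + (-c) by ring, add_pow]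
    rw [hbin, Finset.sum_mul]
    refine Finset.sum_congr rfl fun j hj => ?_
    have hjm : j ≤ m := Nat.lt_succ_iff.1 (Finset.mem_range.1 hj)
    have hnj : n - j = (n - m) + (m - j) := by omega
    rw [hnj, pow_add, nsmul_eq_mul, neg_pow, one_pow]
    ring
  rw [Finset.sum_congr rfl hinner, Finset.sum_const, h𝒮, Finset.card_powersetCard]
  simp only [Finset.card_univ, Fintype.card_fin, nsmul_eq_mul]
  rw [show (1 : ℝ) - (1 - c) = c by ring]
  ring
end
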